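/- For the composite cubature functional $\overline{\mathcal{I}}$ and $f \in C^{2,2}([0,1]^2)$: $\left|\int_0^1\int_0^1 f(x,y)\,dx\,dy - \overline{\mathcal{I}}(f)\right| \le \frac{1}{12 n_1 m_1^2}\|f^{(2,0)}\|_\infty + \frac{1}{12 n_2 m_2^2}\|f^{(0,2)}\|_\infty + \frac{1}{144 n_1 n_2 m_1^2 m_2^2}\|f^{(2,2)}\|_\infty$. -/

import Mathlib

open Finset Set intervalIntegral

open MeasureTheory

/-- real Bernstein basis -/
noncomputable def bp (n i : ℕ) (x : ℝ) : ℝ := (n.choose i : ℝ) * x ^ i * (1 - x) ^ (n - i)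

lemma bp_eval (n i : ℕ) (x : ℝ) :
    Polynomial.eval x (bernsteinPolynomial ℝ n i) = bp n i x := by
  simp [bernsteinPolynomial, bp]

lemma bp_sum (n : ℕ) (x : ℝ) : ∑ i ∈ range (n + 1), bp n i x = 1 := by
  have h := congrArg (Polynomial.eval x) (bernsteinPolynomial.sum ℝ n)
  simpa [Polynomial.eval_finset_sum, bp_eval] using h

lemma bp_sum_smul (n : ℕ) (x : ℝ) :
    ∑ i ∈ range (n + 1), (i : ℝ) * bp n i x = n * x := by
  have h := congrArg (Polynomial.eval x) (bernsteinPolynomial.sum_smul ℝ n)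
  simpa [Polynomial.eval_finset_sum, bp_eval, mul_comm] using h

lemma bp_variance (n : ℕ) (x : ℝ) :
    ∑ i ∈ range (n + 1), ((n : ℝ) * x - i) ^ 2 * bp n i x = n * x * (1 - x) := by
  have h := congrArg (Polynomial.eval x) (bernsteinPolynomial.variance ℝ n)
  simpa [Polynomial.eval_finset_sum, bp_eval] using h

lemma bp_nonneg {n i : ℕ} {x : ℝ} (hx : x ∈ Icc (0:ℝ) 1) : 0 ≤ bp n i x := by
  have h1 : (0:ℝ) ≤ x := hx.1
  have h2 : (0:ℝ) ≤ 1 - x := by linarith [hx.2]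
  unfold bp; positivity

lemma bp_continuous (n i : ℕ) : Continuous (bp n i) := by
  unfold bp; fun_prop

lemma beta_nat (i j : ℕ) : ∫ x in (0:ℝ)..1, x ^ i * (1 - x) ^ j =
    (i.factorial * j.factorial : ℝ) / (i + j + 1).factorial := by
  induction j generalizing i with
  | zero =>
    simp only [pow_zero, mul_one, integral_pow]
    rw [Nat.factorial_succ]
    push_cast
    rw [one_pow, zero_pow (by omega)]
    field_simp
    simp
  | succ j ih =>
    have hu : ∀ x ∈ uIcc (0:ℝ) 1, HasDerivAt (fun x : ℝ => (1 - x) ^ (j+1))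
        (-((j+1) * (1 - x) ^ j)) x := by
      intro x _
      have h1 : HasDerivAt (fun x : ℝ => 1 - x) (-1) x := by
        simpa using (hasDerivAt_id x).const_sub 1
      have := (hasDerivAt_pow (j+1) (1 - x)).comp x h1
      refine this.congr_deriv ?_
      push_cast [Nat.add_sub_cancel]; ring
    have hv : ∀ x ∈ uIcc (0:ℝ) 1, HasDerivAt (fun x : ℝ => x ^ (i+1) / (i+1))
        (x ^ i) x := by
      intro x _
      have := (hasDerivAt_pow (i+1) x).div_const (i+1)
      refine this.congr_deriv ?_
      push_cast [Nat.add_sub_cancel]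
      field_simp
    have hIBP := intervalIntegral.integral_mul_deriv_eq_deriv_mul hu hv
      ((Continuous.intervalIntegrable (by continuity) _ _))
      ((Continuous.intervalIntegrable (by continuity) _ _))
    -- hIBP : ∫ (1-x)^(j+1) * x^i = ... - ∫ (-((j+1)(1-x)^j)) * (x^(i+1)/(i+1))
    have e1 : ∫ x in (0:ℝ)..1, x ^ i * (1 - x) ^ (j+1)
        = ∫ x in (0:ℝ)..1, (1 - x) ^ (j+1) * x ^ i := by
      congr 1; ext x; ring
    rw [e1, hIBP]
    have e2 : ∫ x in (0:ℝ)..1, (-((j+1 : ℝ) * (1 - x) ^ j)) * (x ^ (i+1) / (i+1))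
        = (-((j+1 : ℝ) / (i+1))) * ∫ x in (0:ℝ)..1, x ^ (i+1) * (1 - x) ^ j := by
      rw [← intervalIntegral.integral_const_mul]
      congr 1; ext x; ring
    rw [e2, ih (i+1)]
    have h1 : ((i+1+j+1 : ℕ) : ℝ) = (i + (j+1) + 1 : ℕ) := by push_cast; ring
    simp only [Nat.factorial_succ]
    have hne1 : ((i:ℝ)+1) ≠ 0 := by positivity
    have hne2 : ((i+1+j+1 : ℕ).factorial : ℝ) ≠ 0 := by positivity
    have hcast : (i + (j+1) + 1) = (i+1+j+1) := by omega
    rw [hcast]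
    push_cast
    field_simp
    ring

lemma int_bp {n i : ℕ} (hi : i ≤ n) : ∫ x in (0:ℝ)..1, bp n i x = 1 / (n + 1) := by
  unfold bp
  simp only [mul_assoc]
  rw [intervalIntegral.integral_const_mul, beta_nat]
  have hc : (n.choose i : ℝ) * (i.factorial * (n - i).factorial) = n.factorial := by
    rw [← Nat.cast_mul, ← Nat.cast_mul, ← mul_assoc]
    exact_mod_cast congrArg (Nat.cast (R := ℝ)) (Nat.choose_mul_factorial_mul_factorial hi)
  have he : i + (n - i) + 1 = n + 1 := by omega
  rw [he]
  rw [mul_div_assoc'] at *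
  rw [show (n.choose i : ℝ) * ((i.factorial : ℝ) * ((n-i).factorial : ℝ)) /
    ((n+1).factorial : ℝ) = ((n.choose i : ℝ) * ((i.factorial : ℝ) * ((n-i).factorial : ℝ))) /
    ((n+1).factorial : ℝ) from rfl]
  push_cast at hc
  rw [hc, Nat.factorial_succ]
  have : ((n.factorial : ℝ)) ≠ 0 := by positivity
  push_cast
  field_simp

section
variable {g g' g'' : ℝ → ℝ} {M : ℝ}

/-- Lipschitz bound for g' -/
lemma deriv_lip (hg' : ∀ x ∈ Icc (0:ℝ) 1, HasDerivWithinAt g' (g'' x) (Icc (0:ℝ) 1) x)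
    (hM : ∀ x ∈ Icc (0:ℝ) 1, |g'' x| ≤ M)
    {x s : ℝ} (hx : x ∈ Icc (0:ℝ) 1) (hs : s ∈ Icc (0:ℝ) 1) :
    |g' s - g' x| ≤ M * |s - x| := by
  have := (convex_Icc (0:ℝ) 1).norm_image_sub_le_of_norm_hasDerivWithin_le hg'
    (fun z hz => by simpa using hM z hz) hx hs
  simpa [Real.norm_eq_abs] using this

/-- FTC on a subinterval of [0,1] from within-derivatives -/
lemma ftc_sub (hc : ContinuousOn g (Icc (0:ℝ) 1))
    (hg : ∀ x ∈ Icc (0:ℝ) 1, HasDerivWithinAt g (g' x) (Icc (0:ℝ) 1) x)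
    (hg'c : ContinuousOn g' (Icc (0:ℝ) 1))
    {x c : ℝ} (hx : x ∈ Icc (0:ℝ) 1) (hcm : c ∈ Icc (0:ℝ) 1) :
    ∫ s in x..c, g' s = g c - g x := by
  have huIcc : uIcc x c ⊆ Icc (0:ℝ) 1 := uIcc_subset_Icc hx hcm
  apply integral_eq_sub_of_hasDeriv_right (hc.mono huIcc)
  · intro s hs
    have hs01 : s ∈ Ioo (0:ℝ) 1 := by
      constructor
      · exact lt_of_le_of_lt (le_min hx.1 hcm.1) hs.1
      · exact lt_of_lt_of_le hs.2 (max_le hx.2 hcm.2)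
    have : HasDerivAt g (g' s) s :=
      (hg s (Ioo_subset_Icc_self hs01)).hasDerivAt (Icc_mem_nhds hs01.1 hs01.2)
    exact this.hasDerivWithinAt
  · exact (hg'c.mono huIcc).intervalIntegrable

/-- Taylor order-2 bound -/
lemma taylor2 (hg : ∀ x ∈ Icc (0:ℝ) 1, HasDerivWithinAt g (g' x) (Icc (0:ℝ) 1) x)
    (hg' : ∀ x ∈ Icc (0:ℝ) 1, HasDerivWithinAt g' (g'' x) (Icc (0:ℝ) 1) x)
    (hM : ∀ x ∈ Icc (0:ℝ) 1, |g'' x| ≤ M)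
    {x c : ℝ} (hx : x ∈ Icc (0:ℝ) 1) (hcm : c ∈ Icc (0:ℝ) 1) :
    |g c - g x - g' x * (c - x)| ≤ M / 2 * (c - x) ^ 2 := by
  have hgc : ContinuousOn g (Icc (0:ℝ) 1) := fun z hz => (hg z hz).continuousWithinAt
  have hg'c : ContinuousOn g' (Icc (0:ℝ) 1) := fun z hz => (hg' z hz).continuousWithinAt
  have key : ∫ s in x..c, (g' s - g' x) = g c - g x - g' x * (c - x) := by
    have h1 : ∫ s in x..c, g' s = g c - g x := ftc_sub hgc hg hg'c hx hcm
    have h2 : ∫ s in x..c, (g' s - g' x) =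
        (∫ s in x..c, g' s) - (∫ s in x..c, (fun _ => g' x) s) := by
      apply integral_sub ((hg'c.mono (uIcc_subset_Icc hx hcm)).intervalIntegrable)
        intervalIntegrable_const
    rw [h2, h1, intervalIntegral.integral_const, smul_eq_mul]
    ring
  rw [← key]
  have hint1 : IntervalIntegrable (fun s => g' s - g' x) volume x c :=
    ((hg'c.mono (uIcc_subset_Icc hx hcm)).intervalIntegrable).sub intervalIntegrable_const
  rcases le_total x c with hxc | hxc
  · have hint2 : IntervalIntegrable (fun s => M * (s - x)) volume x c :=
      (continuous_const.mul (continuous_id.sub continuous_const)).intervalIntegrable _ _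
    have hcomp : ∫ s in x..c, M * (s - x) = M / 2 * (c - x) ^ 2 := by
      rw [intervalIntegral.integral_const_mul]
      have h0 : ∫ s in x..c, (s - x) = ∫ u in x - x..c - x, u :=
        intervalIntegral.integral_comp_sub_right (fun u => u) x
      rw [h0, integral_id]; ring
    have hsub : ∀ s ∈ Icc x c, s ∈ Icc (0:ℝ) 1 := fun s hs =>
      ⟨le_trans hx.1 hs.1, le_trans hs.2 hcm.2⟩
    rw [abs_le]
    constructor
    · have : ∫ s in x..c, (-(M * (s - x))) ≤ ∫ s in x..c, (g' s - g' x) := by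
        apply integral_mono_on hxc hint2.neg hint1
        intro s hs
        have := (abs_le.mp (deriv_lip hg' hM hx (hsub s hs))).1
        have habs : |s - x| = s - x := abs_of_nonneg (by linarith [hs.1])
        rw [habs] at this; simp only [Pi.neg_apply]; linarith
      rw [intervalIntegral.integral_neg, hcomp] at this; linarith
    · have : ∫ s in x..c, (g' s - g' x) ≤ ∫ s in x..c, M * (s - x) := by
        apply integral_mono_on hxc hint1 hint2
        intro s hs
        have := (abs_le.mp (deriv_lip hg' hM hx (hsub s hs))).2
        have habs : |s - x| = s - x := abs_of_nonneg (by linarith [hs.1])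
        rw [habs] at this; linarith
      rw [hcomp] at this; linarith
  · have hint2 : IntervalIntegrable (fun s => M * (x - s)) volume c x :=
      (continuous_const.mul (continuous_const.sub continuous_id)).intervalIntegrable _ _
    have hint1' : IntervalIntegrable (fun s => g' s - g' x) volume c x := hint1.symm
    have hcomp : ∫ s in c..x, M * (x - s) = M / 2 * (c - x) ^ 2 := by
      rw [intervalIntegral.integral_const_mul]
      have h0 : ∫ s in c..x, (x - s) = ∫ u in x - x..x - c, u :=
        intervalIntegral.integral_comp_sub_left (fun u => u) x
      rw [h0, integral_id]; ring
    have hsub : ∀ s ∈ Icc c x, s ∈ Icc (0:ℝ) 1 := fun s hs =>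
      ⟨le_trans hcm.1 hs.1, le_trans hs.2 hx.2⟩
    rw [intervalIntegral.integral_symm, abs_neg, abs_le]
    constructor
    · have : ∫ s in c..x, (-(M * (x - s))) ≤ ∫ s in c..x, (g' s - g' x) := by
        apply integral_mono_on hxc hint2.neg hint1'
        intro s hs
        have := (abs_le.mp (deriv_lip hg' hM hx (hsub s hs))).1
        have habs : |s - x| = x - s := by rw [abs_sub_comm]; exact abs_of_nonneg (by linarith [hs.2])
        rw [habs] at this; simp only [Pi.neg_apply]; linarith
      rw [intervalIntegral.integral_neg, hcomp] at this; linarith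
    · have : ∫ s in c..x, (g' s - g' x) ≤ ∫ s in c..x, M * (x - s) := by
        apply integral_mono_on hxc hint1' hint2
        intro s hs
        have := (abs_le.mp (deriv_lip hg' hM hx (hsub s hs))).2
        have habs : |s - x| = x - s := by rw [abs_sub_comm]; exact abs_of_nonneg (by linarith [hs.2])
        rw [habs] at this; linarith
      rw [hcomp] at this; linarith
end

section
variable {g g' g'' : ℝ → ℝ} {M : ℝ}

lemma bernstein_pointwise {n : ℕ} (hn : 0 < n)
    (hg : ∀ x ∈ Icc (0:ℝ) 1, HasDerivWithinAt g (g' x) (Icc (0:ℝ) 1) x)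
    (hg' : ∀ x ∈ Icc (0:ℝ) 1, HasDerivWithinAt g' (g'' x) (Icc (0:ℝ) 1) x)
    (hM : ∀ x ∈ Icc (0:ℝ) 1, |g'' x| ≤ M)
    {x : ℝ} (hx : x ∈ Icc (0:ℝ) 1) :
    |(∑ i ∈ range (n+1), bp n i x * g ((i:ℝ)/n)) - g x| ≤ M * (x * (1-x)) / (2*n) := by
  have hn' : (n:ℝ) ≠ 0 := Nat.cast_ne_zero.mpr hn.ne'
  have hnode : ∀ i ∈ range (n+1), ((i:ℝ)/n) ∈ Icc (0:ℝ) 1 := by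
    intro i hi
    have hi' : (i:ℝ) ≤ n := by exact_mod_cast Nat.lt_succ_iff.mp (mem_range.mp hi)
    constructor
    · positivity
    · rw [div_le_one (by positivity)]; exact hi'
  have e0 : ∑ i ∈ range (n+1), bp n i x * g x = g x := by
    rw [← sum_mul, bp_sum, one_mul]
  have e1 : ∑ i ∈ range (n+1), bp n i x * (g' x * ((i:ℝ)/n - x)) = 0 := by
    have : ∀ i ∈ range (n+1), bp n i x * (g' x * ((i:ℝ)/n - x)) =
        (g' x / n) * ((i:ℝ) * bp n i x) - (g' x * x) * bp n i x := by
      intro i _; field_simp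
    rw [Finset.sum_congr rfl this, Finset.sum_sub_distrib, ← Finset.mul_sum, ← Finset.mul_sum,
      bp_sum_smul, bp_sum]
    field_simp
    ring
  have key : (∑ i ∈ range (n+1), bp n i x * g ((i:ℝ)/n)) - g x =
      ∑ i ∈ range (n+1), bp n i x * (g ((i:ℝ)/n) - g x - g' x * ((i:ℝ)/n - x)) := by
    have : ∀ i ∈ range (n+1), bp n i x * (g ((i:ℝ)/n) - g x - g' x * ((i:ℝ)/n - x)) =
        bp n i x * g ((i:ℝ)/n) - bp n i x * g x - bp n i x * (g' x * ((i:ℝ)/n - x)) := by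
      intro i _; ring
    rw [Finset.sum_congr rfl this, Finset.sum_sub_distrib, Finset.sum_sub_distrib, e0, e1]
    ring
  rw [key]
  calc |∑ i ∈ range (n+1), bp n i x * (g ((i:ℝ)/n) - g x - g' x * ((i:ℝ)/n - x))|
      ≤ ∑ i ∈ range (n+1), |bp n i x * (g ((i:ℝ)/n) - g x - g' x * ((i:ℝ)/n - x))| :=
        Finset.abs_sum_le_sum_abs _ _
    _ ≤ ∑ i ∈ range (n+1), bp n i x * (M / 2 * ((i:ℝ)/n - x)^2) := by
        apply Finset.sum_le_sum
        intro i hi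
        rw [abs_mul, abs_of_nonneg (bp_nonneg hx)]
        exact mul_le_mul_of_nonneg_left (taylor2 hg hg' hM hx (hnode i hi)) (bp_nonneg hx)
    _ = (M / (2 * n^2)) * ∑ i ∈ range (n+1), ((n:ℝ) * x - i)^2 * bp n i x := by
        rw [Finset.mul_sum]
        apply Finset.sum_congr rfl
        intro i _
        field_simp
        ring
    _ = M * (x * (1-x)) / (2*n) := by
        rw [bp_variance]
        field_simp

lemma unit_quad {n : ℕ} (hn : 0 < n)
    (hg : ∀ x ∈ Icc (0:ℝ) 1, HasDerivWithinAt g (g' x) (Icc (0:ℝ) 1) x)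
    (hg' : ∀ x ∈ Icc (0:ℝ) 1, HasDerivWithinAt g' (g'' x) (Icc (0:ℝ) 1) x)
    (hM : ∀ x ∈ Icc (0:ℝ) 1, |g'' x| ≤ M) :
    |(∫ x in (0:ℝ)..1, g x) - (1/((n:ℝ)+1)) * ∑ i ∈ range (n+1), g ((i:ℝ)/n)|
      ≤ M / (12 * n) := by
  have hgc : ContinuousOn g (Icc (0:ℝ) 1) := fun z hz => (hg z hz).continuousWithinAt
  have hu01 : uIcc (0:ℝ) 1 = Icc (0:ℝ) 1 := uIcc_of_le (by norm_num)
  have hgint : IntervalIntegrable g volume 0 1 :=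
    (hgc.mono (by rw [hu01])).intervalIntegrable
  set B : ℝ → ℝ := fun x => ∑ i ∈ range (n+1), bp n i x * g ((i:ℝ)/n) with hB
  have hBcont : Continuous B := by
    apply continuous_finset_sum
    intro i _
    exact (bp_continuous n i).mul continuous_const
  have hBint : IntervalIntegrable B volume 0 1 := hBcont.intervalIntegrable _ _
  have hIB : ∫ x in (0:ℝ)..1, B x = (1/((n:ℝ)+1)) * ∑ i ∈ range (n+1), g ((i:ℝ)/n) := by
    rw [hB]
    beta_reduce
    rw [intervalIntegral.integral_finset_sum (f := fun i x => bp n i x * g ((i:ℝ)/n)) (fun i _ =>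
      (((bp_continuous n i).mul continuous_const).intervalIntegrable _ _ :
        IntervalIntegrable (fun x => bp n i x * g ((i:ℝ)/n)) volume 0 1))]
    rw [Finset.mul_sum]
    apply Finset.sum_congr rfl
    intro i hi
    rw [intervalIntegral.integral_mul_const, int_bp (Nat.lt_succ_iff.mp (mem_range.mp hi))]
  have hsplit : (∫ x in (0:ℝ)..1, g x) - (1/((n:ℝ)+1)) * ∑ i ∈ range (n+1), g ((i:ℝ)/n)
      = ∫ x in (0:ℝ)..1, (g x - B x) := by
    rw [integral_sub hgint hBint, hIB]
  rw [hsplit]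
  have hr : IntervalIntegrable (fun x => M * (x * (1-x)) / (2*(n:ℝ))) volume 0 1 :=
    Continuous.intervalIntegrable (by fun_prop) _ _
  have hgB : IntervalIntegrable (fun x => g x - B x) volume 0 1 := hgint.sub hBint
  have hptw : ∀ x ∈ Icc (0:ℝ) 1, |g x - B x| ≤ M * (x * (1-x)) / (2*n) := by
    intro x hx
    rw [abs_sub_comm]
    exact bernstein_pointwise hn hg hg' hM hx
  have hIr : ∫ x in (0:ℝ)..1, M * (x * (1-x)) / (2*(n:ℝ)) = M / (12 * n) := by
    have e : ∀ x : ℝ, M * (x * (1-x)) / (2*(n:ℝ)) = (M / (2*n)) * (x - x^2) := by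
      intro x; ring
    simp only [e]
    rw [intervalIntegral.integral_const_mul]
    have h3 : ∫ x in (0:ℝ)..1, (x - x^2) = (∫ x in (0:ℝ)..1, x) - ∫ x in (0:ℝ)..1, x^2 :=
      integral_sub (Continuous.intervalIntegrable (by fun_prop) _ _)
        (Continuous.intervalIntegrable (by fun_prop) _ _)
    rw [h3, integral_id, integral_pow]
    have hn' : (n:ℝ) ≠ 0 := Nat.cast_ne_zero.mpr hn.ne'
    field_simp
    norm_num
    ring
  rw [abs_le]
  constructor
  · have hrn : IntervalIntegrable (fun x => -(M * (x * (1-x)) / (2*(n:ℝ)))) volume 0 1 :=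
      Continuous.intervalIntegrable (by fun_prop) _ _
    have h := integral_mono_on (by norm_num : (0:ℝ) ≤ 1) hrn hgB
      (fun x hx => neg_le_of_abs_le (hptw x hx))
    rw [intervalIntegral.integral_neg, hIr] at h
    linarith
  · have h := integral_mono_on (by norm_num : (0:ℝ) ≤ 1) hgB hr
      (fun x hx => le_of_abs_le (hptw x hx))
    rw [hIr] at h
    linarith
end

section
variable {g g' g'' : ℝ → ℝ} {M : ℝ}

lemma cell_quad {n m : ℕ} (hn : 0 < n) (hm : 0 < m)
    (hg : ∀ x ∈ Icc (0:ℝ) 1, HasDerivWithinAt g (g' x) (Icc (0:ℝ) 1) x)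
    (hg' : ∀ x ∈ Icc (0:ℝ) 1, HasDerivWithinAt g' (g'' x) (Icc (0:ℝ) 1) x)
    (hM : ∀ x ∈ Icc (0:ℝ) 1, |g'' x| ≤ M)
    {j : ℕ} (hj : j < m) :
    |(∫ x in ((j:ℝ)/m)..(((j:ℝ)+1)/m), g x)
        - (1/((m:ℝ)*((n:ℝ)+1))) * ∑ i ∈ range (n+1), g ((j:ℝ)/m + (i:ℝ)/((m:ℝ)*n))|
      ≤ M / (12 * n * m^3) := by
  have hm' : (0:ℝ) < m := by exact_mod_cast hm
  have hn' : (0:ℝ) < n := by exact_mod_cast hn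
  set a : ℝ := (j:ℝ)/m with ha
  have hj' : (j:ℝ) + 1 ≤ (m:ℝ) := by exact_mod_cast hj
  have ha0 : 0 ≤ a := by positivity
  have hab : a + 1/m = ((j:ℝ)+1)/m := by rw [ha]; field_simp
  have hb1 : ((j:ℝ)+1)/m ≤ 1 := by rw [div_le_one hm']; exact hj'
  have hmaps : ∀ t ∈ Icc (0:ℝ) 1, a + t/m ∈ Icc (0:ℝ) 1 := by
    intro t ht
    have h1 : t/m ≤ 1/m := by gcongr; exact ht.2
    have h2 : 0 ≤ t/m := div_nonneg ht.1 hm'.le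
    exact ⟨by linarith, by linarith⟩
  set G : ℝ → ℝ := fun t => g (a + t/m) with hG
  set G1 : ℝ → ℝ := fun t => g' (a + t/m) * (1/m) with hG1
  set G2 : ℝ → ℝ := fun t => (g'' (a + t/m) * (1/m)) * (1/m) with hG2
  have haff : ∀ t ∈ Icc (0:ℝ) 1, HasDerivWithinAt (fun t : ℝ => a + t/m) (1/m) (Icc (0:ℝ) 1) t := by
    intro t _
    simpa using ((hasDerivWithinAt_id t (Icc (0:ℝ) 1)).div_const (m:ℝ)).const_add a
  have hGder : ∀ t ∈ Icc (0:ℝ) 1, HasDerivWithinAt G (G1 t) (Icc (0:ℝ) 1) t := by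
    intro t ht
    exact HasDerivWithinAt.comp t (hg _ (hmaps t ht)) (haff t ht) (fun s hs => hmaps s hs)
  have hG1der : ∀ t ∈ Icc (0:ℝ) 1, HasDerivWithinAt G1 (G2 t) (Icc (0:ℝ) 1) t := by
    intro t ht
    exact (HasDerivWithinAt.comp t (hg' _ (hmaps t ht)) (haff t ht)
      (fun s hs => hmaps s hs)).mul_const (1/m)
  have hG2bd : ∀ t ∈ Icc (0:ℝ) 1, |G2 t| ≤ M / m^2 := by
    intro t ht
    have := hM _ (hmaps t ht)
    rw [hG2]
    rw [abs_mul, abs_mul, abs_of_nonneg (by positivity : (0:ℝ) ≤ 1/(m:ℝ))]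
    calc |g'' (a + t/m)| * (1/(m:ℝ)) * (1/(m:ℝ)) ≤ M * (1/m) * (1/m) := by
          apply mul_le_mul_of_nonneg_right _ (by positivity)
          exact mul_le_mul_of_nonneg_right this (by positivity)
      _ = M / m^2 := by ring
  have hkey := unit_quad hn hGder hG1der hG2bd
  -- substitution for the integral
  have hsub : ∫ x in a..(((j:ℝ)+1)/m), g x = (1/m) * ∫ t in (0:ℝ)..1, G t := by
    have h1 : ∫ t in (0:ℝ)..1, G t = ∫ t in (0:ℝ)..1, g ((1/(m:ℝ))*t + a) := by
      apply intervalIntegral.integral_congr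
      intro t _
      rw [hG]
      congr 1
      ring
    rw [h1, intervalIntegral.integral_comp_mul_add g (by positivity : (1/(m:ℝ)) ≠ 0) a]
    rw [smul_eq_mul, ← hab]
    have : (1/(m:ℝ))⁻¹ = m := by field_simp
    rw [this]
    have e1 : (1/(m:ℝ)) * 0 + a = a := by ring
    have e2 : (1/(m:ℝ)) * 1 + a = a + 1/m := by ring
    rw [e1, e2]
    field_simp
  -- node identification
  have hnode : ∀ i : ℕ, G ((i:ℝ)/n) = g (a + (i:ℝ)/((m:ℝ)*n)) := by
    intro i
    show g (a + ((i:ℝ)/n)/(m:ℝ)) = g (a + (i:ℝ)/((m:ℝ)*n))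
    congr 1
    rw [div_div, mul_comm ((n:ℝ)) ((m:ℝ))]
  have hsum : (1/((m:ℝ)*((n:ℝ)+1))) * ∑ i ∈ range (n+1), g (a + (i:ℝ)/((m:ℝ)*n))
      = (1/m) * ((1/((n:ℝ)+1)) * ∑ i ∈ range (n+1), G ((i:ℝ)/n)) := by
    simp only [hnode]
    rw [← mul_assoc]
    congr 1
    rw [eq_comm, div_mul_div_comm, one_mul]
  rw [hsub, hsum, ← mul_sub, abs_mul, abs_of_nonneg (by positivity : (0:ℝ) ≤ 1/(m:ℝ))]
  calc (1/(m:ℝ)) * |(∫ t in (0:ℝ)..1, G t) - (1/((n:ℝ)+1)) * ∑ i ∈ range (n+1), G ((i:ℝ)/n)|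
      ≤ (1/(m:ℝ)) * ((M/m^2) / (12*n)) := mul_le_mul_of_nonneg_left hkey (by positivity)
    _ = M / (12 * n * m^3) := by
        rw [div_div, one_div, inv_mul_eq_div, div_div]
        congr 1
        ring

lemma comp_quad {n m : ℕ} (hn : 0 < n) (hm : 0 < m)
    (hg : ∀ x ∈ Icc (0:ℝ) 1, HasDerivWithinAt g (g' x) (Icc (0:ℝ) 1) x)
    (hg' : ∀ x ∈ Icc (0:ℝ) 1, HasDerivWithinAt g' (g'' x) (Icc (0:ℝ) 1) x)
    (hM : ∀ x ∈ Icc (0:ℝ) 1, |g'' x| ≤ M) :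
    |(∫ x in (0:ℝ)..1, g x)
        - (1/((m:ℝ)*((n:ℝ)+1))) * ∑ k ∈ Finset.Icc 1 m, ∑ i ∈ range (n+1),
            g (((k:ℝ)-1)/m + (i:ℝ)/((m:ℝ)*n))|
      ≤ M / (12 * n * m^2) := by
  have hm' : (0:ℝ) < m := by exact_mod_cast hm
  have hn' : (0:ℝ) < n := by exact_mod_cast hn
  have hgc : ContinuousOn g (Icc (0:ℝ) 1) := fun z hz => (hg z hz).continuousWithinAt
  -- split the integral
  set aa : ℕ → ℝ := fun k => (k:ℝ)/m with haa
  have hint : ∀ k < m, IntervalIntegrable g volume (aa k) (aa (k+1)) := by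
    intro k hk
    apply (hgc.mono _).intervalIntegrable
    have h1 : aa k ≤ aa (k+1) := by
      simp only [haa]
      rw [div_le_div_iff₀ hm' hm']
      push_cast
      nlinarith [hm']
    rw [uIcc_of_le h1]
    apply Set.Icc_subset_Icc
    · simp only [haa]; positivity
    · simp only [haa]
      have h2 : ((k:ℝ)+1) ≤ m := by exact_mod_cast hk
      rw [div_le_one hm']
      push_cast
      linarith
  have hsplitI := intervalIntegral.sum_integral_adjacent_intervals (μ := volume) (f := g)
    (a := aa) (n := m) hint
  have ha0 : aa 0 = 0 := by simp [haa]
  have ham : aa m = 1 := by rw [haa]; field_simp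
  rw [ha0, ham] at hsplitI
  -- rewrite node sum over Icc 1 m as over range m
  have hreindex : ∑ k ∈ Finset.Icc 1 m, ∑ i ∈ range (n+1), g (((k:ℝ)-1)/m + (i:ℝ)/((m:ℝ)*n))
      = ∑ j ∈ range m, ∑ i ∈ range (n+1), g ((j:ℝ)/m + (i:ℝ)/((m:ℝ)*n)) := by
    rw [← Finset.Ico_add_one_right_eq_Icc, Finset.sum_Ico_eq_sum_range]
    simp only [Nat.add_sub_cancel]
    apply Finset.sum_congr rfl
    intro j _
    apply Finset.sum_congr rfl
    intro i _
    congr 2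
    push_cast
    ring
  rw [hreindex, ← hsplitI, Finset.mul_sum, ← Finset.sum_sub_distrib]
  calc |∑ j ∈ range m, ((∫ x in aa j..aa (j+1), g x)
        - (1/((m:ℝ)*((n:ℝ)+1))) * ∑ i ∈ range (n+1), g ((j:ℝ)/m + (i:ℝ)/((m:ℝ)*n)))|
      ≤ ∑ j ∈ range m, |(∫ x in aa j..aa (j+1), g x)
        - (1/((m:ℝ)*((n:ℝ)+1))) * ∑ i ∈ range (n+1), g ((j:ℝ)/m + (i:ℝ)/((m:ℝ)*n))| :=
        Finset.abs_sum_le_sum_abs _ _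
    _ ≤ ∑ _j ∈ range m, M / (12 * n * m^3) := by
        apply Finset.sum_le_sum
        intro j hj
        have h := cell_quad hn hm hg hg' hM (mem_range.mp hj)
        simp only [haa]
        push_cast
        exact h
    _ = M / (12 * n * m^2) := by
        rw [Finset.sum_const, card_range, nsmul_eq_mul]
        field_simp
end

lemma node_mem {m n : ℕ} (hm : 0 < m) (hn : 0 < n) {k i : ℕ}
    (hk : k ∈ Finset.Icc 1 m) (hi : i ∈ range (n+1)) :
    ((k:ℝ)-1)/m + (i:ℝ)/((m:ℝ)*n) ∈ Icc (0:ℝ) 1 := by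
  have hm' : (0:ℝ) < m := by exact_mod_cast hm
  have hn' : (0:ℝ) < n := by exact_mod_cast hn
  obtain ⟨hk1, hkm⟩ := Finset.mem_Icc.mp hk
  have hk1' : (1:ℝ) ≤ k := by exact_mod_cast hk1
  have hkm' : (k:ℝ) ≤ m := by exact_mod_cast hkm
  have hi' : (i:ℝ) ≤ n := by exact_mod_cast Nat.lt_succ_iff.mp (mem_range.mp hi)
  constructor
  · have h1 : 0 ≤ ((k:ℝ)-1)/m := div_nonneg (by linarith) hm'.le
    have h2 : 0 ≤ (i:ℝ)/((m:ℝ)*n) := div_nonneg (by positivity) (by positivity)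
    linarith
  · have h1 : (i:ℝ)/((m:ℝ)*n) ≤ (n:ℝ)/((m:ℝ)*n) := by gcongr
    have h2 : (n:ℝ)/((m:ℝ)*n) = 1/m := by field_simp
    have h3 : ((k:ℝ)-1)/m + 1/m ≤ 1 := by
      rw [← add_div, div_le_one hm']
      linarith
    linarith [h1, h2 ▸ h1]


/-- The composite Bernstein cubature functional on `[0,1]²`. -/
noncomputable def Ibar (n₁ n₂ m₁ m₂ : ℕ) (f : ℝ → ℝ → ℝ) : ℝ :=
  (1 / ((m₁ : ℝ) * m₂ * (n₁ + 1) * (n₂ + 1))) *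
    ∑ k ∈ Finset.Icc 1 m₁, ∑ l ∈ Finset.Icc 1 m₂,
      ∑ i ∈ Finset.range (n₁ + 1), ∑ j ∈ Finset.range (n₂ + 1),
        f (((k : ℝ) - 1) / m₁ + (i : ℝ) / (m₁ * n₁))
          (((l : ℝ) - 1) / m₂ + (j : ℝ) / (m₂ * n₂))

/-- three-term error bound for the composite Bernstein cubature formula,
for `f ∈ C^{2,2}([0,1]²)`. -/
theorem stmt9 (n₁ n₂ m₁ m₂ : ℕ) (hn₁ : 0 < n₁) (hn₂ : 0 < n₂) (hm₁ : 0 < m₁) (hm₂ : 0 < m₂)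
    (f fx fxx fy fyy fxxy fxxyy : ℝ → ℝ → ℝ)
    (hfc : ContinuousOn (fun p : ℝ × ℝ => f p.1 p.2)
      (Set.Icc (0:ℝ) 1 ×ˢ Set.Icc (0:ℝ) 1))
    (hfx : ∀ y ∈ Set.Icc (0:ℝ) 1, ∀ x ∈ Set.Icc (0:ℝ) 1,
      HasDerivWithinAt (fun t => f t y) (fx x y) (Set.Icc (0:ℝ) 1) x)
    (hfxx : ∀ y ∈ Set.Icc (0:ℝ) 1, ∀ x ∈ Set.Icc (0:ℝ) 1,
      HasDerivWithinAt (fun t => fx t y) (fxx x y) (Set.Icc (0:ℝ) 1) x)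
    (hfy : ∀ x ∈ Set.Icc (0:ℝ) 1, ∀ y ∈ Set.Icc (0:ℝ) 1,
      HasDerivWithinAt (fun t => f x t) (fy x y) (Set.Icc (0:ℝ) 1) y)
    (hfyy : ∀ x ∈ Set.Icc (0:ℝ) 1, ∀ y ∈ Set.Icc (0:ℝ) 1,
      HasDerivWithinAt (fun t => fy x t) (fyy x y) (Set.Icc (0:ℝ) 1) y)
    (hfxxy : ∀ x ∈ Set.Icc (0:ℝ) 1, ∀ y ∈ Set.Icc (0:ℝ) 1,
      HasDerivWithinAt (fun t => fxx x t) (fxxy x y) (Set.Icc (0:ℝ) 1) y)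
    (hfxxyy : ∀ x ∈ Set.Icc (0:ℝ) 1, ∀ y ∈ Set.Icc (0:ℝ) 1,
      HasDerivWithinAt (fun t => fxxy x t) (fxxyy x y) (Set.Icc (0:ℝ) 1) y)
    (hfxxc : ContinuousOn (fun p : ℝ × ℝ => fxx p.1 p.2)
      (Set.Icc (0:ℝ) 1 ×ˢ Set.Icc (0:ℝ) 1))
    (hfyyc : ContinuousOn (fun p : ℝ × ℝ => fyy p.1 p.2)
      (Set.Icc (0:ℝ) 1 ×ˢ Set.Icc (0:ℝ) 1))
    (hfxxyyc : ContinuousOn (fun p : ℝ × ℝ => fxxyy p.1 p.2)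
      (Set.Icc (0:ℝ) 1 ×ˢ Set.Icc (0:ℝ) 1)) :
    |(∫ x in (0:ℝ)..1, ∫ y in (0:ℝ)..1, f x y) - Ibar n₁ n₂ m₁ m₂ f| ≤
      (1 / (12 * n₁ * m₁ ^ 2)) *
          (⨆ p : (Set.Icc (0:ℝ) 1 ×ˢ Set.Icc (0:ℝ) 1 : Set (ℝ × ℝ)),
            |fxx (p : ℝ × ℝ).1 (p : ℝ × ℝ).2|) +
        (1 / (12 * n₂ * m₂ ^ 2)) *
          (⨆ p : (Set.Icc (0:ℝ) 1 ×ˢ Set.Icc (0:ℝ) 1 : Set (ℝ × ℝ)),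
            |fyy (p : ℝ × ℝ).1 (p : ℝ × ℝ).2|) +
        (1 / (144 * n₁ * n₂ * m₁ ^ 2 * m₂ ^ 2)) *
          (⨆ p : (Set.Icc (0:ℝ) 1 ×ˢ Set.Icc (0:ℝ) 1 : Set (ℝ × ℝ)),
            |fxxyy (p : ℝ × ℝ).1 (p : ℝ × ℝ).2|) := by

  have hm₁' : (0:ℝ) < m₁ := by exact_mod_cast hm₁
  have hm₂' : (0:ℝ) < m₂ := by exact_mod_cast hm₂
  have hn₁' : (0:ℝ) < n₁ := by exact_mod_cast hn₁
  have hn₂' : (0:ℝ) < n₂ := by exact_mod_cast hn₂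
  set S : Set (ℝ × ℝ) := Set.Icc (0:ℝ) 1 ×ˢ Set.Icc (0:ℝ) 1 with hS
  have hScomp : IsCompact S := isCompact_Icc.prod isCompact_Icc
  have hSne : Nonempty S := ⟨⟨(0,0), by constructor <;> constructor <;> norm_num⟩⟩
  -- sup bounds
  set Mxx : ℝ := ⨆ p : S, |fxx (p : ℝ × ℝ).1 (p : ℝ × ℝ).2| with hMxxdef
  set Myy : ℝ := ⨆ p : S, |fyy (p : ℝ × ℝ).1 (p : ℝ × ℝ).2| with hMyydef
  have hsup : ∀ (h : ℝ → ℝ → ℝ), ContinuousOn (fun p : ℝ × ℝ => h p.1 p.2) S →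
      ∀ x ∈ Icc (0:ℝ) 1, ∀ y ∈ Icc (0:ℝ) 1,
        |h x y| ≤ ⨆ p : S, |h (p : ℝ × ℝ).1 (p : ℝ × ℝ).2| := by
    intro h hc x hx y hy
    obtain ⟨C, hC⟩ := hScomp.exists_bound_of_continuousOn hc
    have hbdd : BddAbove (Set.range fun p : S => |h (p : ℝ × ℝ).1 (p : ℝ × ℝ).2|) := by
      refine ⟨C, ?_⟩
      rintro _ ⟨p, rfl⟩
      simpa [Real.norm_eq_abs] using hC p p.2
    exact le_ciSup hbdd (⟨(x,y), Set.mk_mem_prod hx hy⟩ : S)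
  have hMxx : ∀ x ∈ Icc (0:ℝ) 1, ∀ y ∈ Icc (0:ℝ) 1, |fxx x y| ≤ Mxx :=
    hsup fxx hfxxc
  have hMyy : ∀ x ∈ Icc (0:ℝ) 1, ∀ y ∈ Icc (0:ℝ) 1, |fyy x y| ≤ Myy :=
    hsup fyy hfyyc
  have hMxx0 : 0 ≤ Mxx := le_trans (abs_nonneg _) (hMxx 0 (by norm_num) 0 (by norm_num))
  -- the semi-discrete operator
  set ynode : ℕ → ℕ → ℝ := fun l j => ((l:ℝ)-1)/m₂ + (j:ℝ)/((m₂:ℝ)*n₂) with hynode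
  have hyn : ∀ l ∈ Finset.Icc 1 m₂, ∀ j ∈ range (n₂+1), ynode l j ∈ Icc (0:ℝ) 1 :=
    fun l hl j hj => node_mem hm₂ hn₂ hl hj
  set c₂ : ℝ := 1/((m₂:ℝ)*((n₂:ℝ)+1)) with hc₂
  have hc₂0 : 0 ≤ c₂ := by positivity
  set Qy : ℝ → ℝ := fun x => c₂ * ∑ l ∈ Finset.Icc 1 m₂, ∑ j ∈ range (n₂+1), f x (ynode l j)
    with hQy
  set Qy1 : ℝ → ℝ := fun x => c₂ * ∑ l ∈ Finset.Icc 1 m₂, ∑ j ∈ range (n₂+1), fx x (ynode l j)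
    with hQy1
  set Qy2 : ℝ → ℝ := fun x => c₂ * ∑ l ∈ Finset.Icc 1 m₂, ∑ j ∈ range (n₂+1), fxx x (ynode l j)
    with hQy2
  have hQyder : ∀ x ∈ Icc (0:ℝ) 1, HasDerivWithinAt Qy (Qy1 x) (Icc (0:ℝ) 1) x := by
    intro x hx
    apply HasDerivWithinAt.const_mul
    apply HasDerivWithinAt.fun_sum
    intro l hl
    apply HasDerivWithinAt.fun_sum
    intro j hj
    exact hfx _ (hyn l hl j hj) x hx
  have hQy1der : ∀ x ∈ Icc (0:ℝ) 1, HasDerivWithinAt Qy1 (Qy2 x) (Icc (0:ℝ) 1) x := by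
    intro x hx
    apply HasDerivWithinAt.const_mul
    apply HasDerivWithinAt.fun_sum
    intro l hl
    apply HasDerivWithinAt.fun_sum
    intro j hj
    exact hfxx _ (hyn l hl j hj) x hx
  have hQy2bd : ∀ x ∈ Icc (0:ℝ) 1, |Qy2 x| ≤ Mxx := by
    intro x hx
    rw [hQy2]
    simp only [abs_mul, abs_of_nonneg hc₂0]
    calc c₂ * |∑ l ∈ Finset.Icc 1 m₂, ∑ j ∈ range (n₂+1), fxx x (ynode l j)|
        ≤ c₂ * ∑ l ∈ Finset.Icc 1 m₂, ∑ j ∈ range (n₂+1), |fxx x (ynode l j)| := by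
          apply mul_le_mul_of_nonneg_left _ hc₂0
          calc |∑ l ∈ Finset.Icc 1 m₂, ∑ j ∈ range (n₂+1), fxx x (ynode l j)|
              ≤ ∑ l ∈ Finset.Icc 1 m₂, |∑ j ∈ range (n₂+1), fxx x (ynode l j)| :=
                Finset.abs_sum_le_sum_abs _ _
            _ ≤ ∑ l ∈ Finset.Icc 1 m₂, ∑ j ∈ range (n₂+1), |fxx x (ynode l j)| :=
                Finset.sum_le_sum (fun l _ => Finset.abs_sum_le_sum_abs _ _)
      _ ≤ c₂ * ∑ l ∈ Finset.Icc 1 m₂, ∑ j ∈ range (n₂+1), Mxx := by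
          apply mul_le_mul_of_nonneg_left _ hc₂0
          apply Finset.sum_le_sum
          intro l hl
          apply Finset.sum_le_sum
          intro j hj
          exact hMxx x hx _ (hyn l hl j hj)
      _ = Mxx := by
          rw [Finset.sum_const, Finset.sum_const]
          simp only [Nat.card_Icc, card_range, smul_eq_mul, Nat.add_sub_cancel, nsmul_eq_mul]
          rw [hc₂]
          push_cast
          field_simp
  -- the x-quadrature of Qy equals Ibar
  have hIbar : (1/((m₁:ℝ)*((n₁:ℝ)+1))) * ∑ k ∈ Finset.Icc 1 m₁, ∑ i ∈ range (n₁+1),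
      Qy (((k:ℝ)-1)/m₁ + (i:ℝ)/((m₁:ℝ)*n₁)) = Ibar n₁ n₂ m₁ m₂ f := by
    rw [Ibar]
    simp only [hQy, hynode, ← Finset.mul_sum]
    rw [← mul_assoc]
    have hcc : 1/((m₁:ℝ)*((n₁:ℝ)+1)) * c₂ = 1 / ((m₁ : ℝ) * m₂ * ((n₁:ℝ) + 1) * ((n₂:ℝ) + 1)) := by
      rw [hc₂, div_mul_div_comm, one_mul]
      congr 1
      ring
    rw [hcc]
    congr 1
    apply Finset.sum_congr rfl
    intro k _
    exact Finset.sum_comm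
  -- error in x-direction
  have hA2 := comp_quad hn₁ hm₁ hQyder hQy1der hQy2bd
  rw [hIbar] at hA2
  have hu01 : uIcc (0:ℝ) 1 = Icc (0:ℝ) 1 := uIcc_of_le (by norm_num)
  -- slices are continuous
  have hcont_slice : ∀ y ∈ Icc (0:ℝ) 1, ContinuousOn (fun x => f x y) (Icc (0:ℝ) 1) := by
    intro y hy
    have h := hfc.comp ((continuous_id.prodMk continuous_const).continuousOn)
      (fun x (hx : x ∈ Icc (0:ℝ) 1) => Set.mk_mem_prod hx hy)
    exact h
  have hcont_slice2 : ∀ x ∈ Icc (0:ℝ) 1, ContinuousOn (fun y => f x y) (Icc (0:ℝ) 1) := by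
    intro x hx
    have h := hfc.comp ((continuous_const.prodMk continuous_id).continuousOn)
      (fun y (hy : y ∈ Icc (0:ℝ) 1) => Set.mk_mem_prod hx hy)
    exact h
  -- per-x error in the y-direction
  set F : ℝ → ℝ := fun x => ∫ y in (0:ℝ)..1, f x y with hF
  have hE : ∀ x ∈ Icc (0:ℝ) 1, |F x - Qy x| ≤ Myy / (12 * n₂ * m₂^2) := by
    intro x hx
    have h := comp_quad hn₂ hm₂ (fun y hy => hfy x hx y hy) (fun y hy => hfyy x hx y hy)
      (fun y hy => hMyy x hx y hy)
    simp only [hQy, hc₂, hynode, hF]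
    simpa using h
  have hQycont : ContinuousOn Qy (Icc (0:ℝ) 1) := by
    rw [hQy]
    exact continuousOn_const.mul (continuousOn_finset_sum _ (fun l hl =>
      continuousOn_finset_sum _ (fun j hj => hcont_slice _ (hyn l hl j hj))))
  have hFcont : ContinuousOn F (Icc (0:ℝ) 1) := by
    obtain ⟨C, hC⟩ := hScomp.exists_bound_of_continuousOn hfc
    have hdom : ContinuousOn (fun x => ∫ y in Ioc (0:ℝ) 1, f x y) (Icc (0:ℝ) 1) := by
      apply MeasureTheory.continuousOn_of_dominated
        (bound := fun _ => C)
      · intro x hx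
        exact ((hcont_slice2 x hx).mono Ioc_subset_Icc_self).aestronglyMeasurable
          measurableSet_Ioc
      · intro x hx
        filter_upwards [ae_restrict_mem measurableSet_Ioc] with y hy
        exact hC (x, y) (Set.mk_mem_prod hx (Ioc_subset_Icc_self hy))
      · exact (integrableOn_const measure_Ioc_lt_top.ne)
      · filter_upwards [ae_restrict_mem measurableSet_Ioc] with y hy
        exact hcont_slice y (Ioc_subset_Icc_self hy)
    apply hdom.congr
    intro x _
    rw [hF]
    exact intervalIntegral.integral_of_le (by norm_num)
  have hFint : IntervalIntegrable F volume 0 1 :=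
    (hFcont.mono (by rw [hu01])).intervalIntegrable
  have hQyint : IntervalIntegrable Qy volume 0 1 :=
    (hQycont.mono (by rw [hu01])).intervalIntegrable
  have hsplit2 : (∫ x in (0:ℝ)..1, F x) - (∫ x in (0:ℝ)..1, Qy x)
      = ∫ x in (0:ℝ)..1, (F x - Qy x) := (integral_sub hFint hQyint).symm
  have hT1 : |(∫ x in (0:ℝ)..1, F x) - (∫ x in (0:ℝ)..1, Qy x)| ≤ Myy / (12*n₂*m₂^2) := by
    rw [hsplit2]
    have hptw : ∀ x ∈ Set.uIoc (0:ℝ) 1, ‖F x - Qy x‖ ≤ Myy / (12*n₂*m₂^2) := by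
      intro x hx
      have hx' : x ∈ Icc (0:ℝ) 1 := by
        rw [uIoc_of_le (by norm_num : (0:ℝ) ≤ 1)] at hx
        exact Ioc_subset_Icc_self hx
      simpa [Real.norm_eq_abs] using hE x hx'
    have h := intervalIntegral.norm_integral_le_of_norm_le_const hptw
    simpa [Real.norm_eq_abs] using h
  -- combine everything
  have hT3 : 0 ≤ (1 / (144 * (n₁:ℝ) * n₂ * m₁ ^ 2 * m₂ ^ 2)) *
      (⨆ p : S, |fxxyy (p : ℝ × ℝ).1 (p : ℝ × ℝ).2|) :=
    mul_nonneg (by positivity) (Real.iSup_nonneg fun p => abs_nonneg _)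
  have htri := abs_sub_le (∫ x in (0:ℝ)..1, F x) (∫ x in (0:ℝ)..1, Qy x) (Ibar n₁ n₂ m₁ m₂ f)
  have e1 : Myy/(12*(n₂:ℝ)*m₂^2) = 1/(12*(n₂:ℝ)*m₂^2) * Myy := by ring
  have e2 : Mxx/(12*(n₁:ℝ)*m₁^2) = 1/(12*(n₁:ℝ)*m₁^2) * Mxx := by ring
  calc |(∫ x in (0:ℝ)..1, F x) - Ibar n₁ n₂ m₁ m₂ f|
      ≤ |(∫ x in (0:ℝ)..1, F x) - (∫ x in (0:ℝ)..1, Qy x)|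
        + |(∫ x in (0:ℝ)..1, Qy x) - Ibar n₁ n₂ m₁ m₂ f| := htri
    _ ≤ Myy/(12*(n₂:ℝ)*m₂^2) + Mxx/(12*(n₁:ℝ)*m₁^2) := add_le_add hT1 hA2
    _ ≤ _ := by
        rw [e1, e2]
        push_cast
        linarith [hT3]
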